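/- Let p be a prime, n ≥ 3 an integer and γ ≤ -2 an integer. Then there is no p-ary nearly perfect sequence of period n and type γ; that is, there is no sequence a of period n with each a_i a p-th root of unity such that C_a(t) = γ for all 1 ≤ t ≤ n-1. -/

import Mathlib

theorem stmt_2 (p : ℕ) (hp : p.Prime) (n : ℕ) [NeZero n] (hn : 3 ≤ n) (γ : ℤ)
    (hγ : γ ≤ -2) (ζ : ℂ) (hζ : IsPrimitiveRoot ζ p) :
    ¬ ∃ a : ZMod n → ℂ, (∀ i, ∃ k : ℕ, a i = ζ ^ k) ∧
      (∀ t : ZMod n, t ≠ 0 →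
        ∑ i : ZMod n, a i * (starRingEnd ℂ) (a (i + t)) = γ) := by
  rintro ⟨a, ha, hC⟩
  classical
  have hζabs : ‖ζ‖ = 1 :=
    Complex.norm_eq_one_of_pow_eq_one hζ.pow_eq_one hp.ne_zero
  have hai : ∀ i : ZMod n, a i * (starRingEnd ℂ) (a i) = 1 := by
    intro i
    obtain ⟨k, hk⟩ := ha i
    rw [hk, Complex.mul_conj, Complex.normSq_eq_norm_sq, norm_pow, hζabs, one_pow, one_pow,
      Complex.ofReal_one]
  set S := ∑ i : ZMod n, a i with hS
  have h1 : ∑ t : ZMod n, ∑ i : ZMod n, a i * (starRingEnd ℂ) (a (i + t)) =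
      S * (starRingEnd ℂ) S := by
    rw [Finset.sum_comm]
    calc ∑ i : ZMod n, ∑ t : ZMod n, a i * (starRingEnd ℂ) (a (i + t))
        = ∑ i : ZMod n, a i * (starRingEnd ℂ) S := by
          refine Finset.sum_congr rfl fun i _ => ?_
          rw [← Finset.mul_sum, ← map_sum]
          congr 2
          exact Fintype.sum_equiv (Equiv.addLeft i) _ a fun t => rfl
      _ = S * (starRingEnd ℂ) S := by rw [← Finset.sum_mul]
  have hn1 : 1 ≤ n := by omega
  have h2 : ∑ t : ZMod n, ∑ i : ZMod n, a i * (starRingEnd ℂ) (a (i + t)) =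
      (n : ℂ) + ((n : ℂ) - 1) * (γ : ℂ) := by
    rw [← Finset.add_sum_erase _ _ (Finset.mem_univ (0 : ZMod n))]
    congr 1
    · simp [hai]
    · rw [Finset.sum_congr rfl fun t ht => hC t (Finset.ne_of_mem_erase ht),
        Finset.sum_const, Finset.card_erase_of_mem (Finset.mem_univ _), Finset.card_univ,
        ZMod.card, nsmul_eq_mul, Nat.cast_sub hn1, Nat.cast_one]
  have h3 : ((Complex.normSq S : ℝ) : ℂ) = (n : ℂ) + ((n : ℂ) - 1) * (γ : ℂ) := by
    rw [← Complex.mul_conj, ← h1, h2]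
  have h4 : (Complex.normSq S : ℝ) = (n : ℝ) + ((n : ℝ) - 1) * (γ : ℝ) := by
    exact_mod_cast h3
  have h5 : (0 : ℝ) ≤ Complex.normSq S := Complex.normSq_nonneg S
  have hn' : (3 : ℝ) ≤ (n : ℝ) := by exact_mod_cast hn
  have hγ' : (γ : ℝ) ≤ -2 := by exact_mod_cast hγ
  nlinarith
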